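/- arXiv:1106.1791 — 2 statements merged into one kernel-verified Lean document; each statement's English description precedes it below -/
import Mathlib

section
/- Let I be a map sending every probability measure on every finite set to a nonnegative real number. Suppose: (1) I is invariant under bijections; (2) I is continuous on the simplex of probability measures on {1,…,n} for each n; (3) I((1)) = 0, where (1) is the unique probability measure on a one-element set; (4) for any probability measure p = (p_1,…,p_n) on {1,…,n} and any probability measures q(1),…,q(n) on finite sets X_1,…,X_n, one has I(p_1 q(1) ⊕ ⋯ ⊕ p_n q(n)) = I(p) + Σ_{i=1}^n p_i I(q(i)). Then there exists a constant c ≥ 0 such that I(p) = c·H(p) for all p, where H is Shannon entropy. Conversely, any constant nonnegative multiple of Shannon entropy satisfies conditions (1)–(4). -/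
open scoped BigOperators Classical
open Filter Topology Real

/-- `p` is a probability measure on the finite set `X`. -/
def IsProb {X : Type} [Fintype X] (p : X → ℝ) : Prop :=
  (∀ i, 0 ≤ p i) ∧ ∑ i, p i = 1

/-- `p` is a (nonnegative) measure on the finite set `X`. -/
def IsMeas {X : Type} [Fintype X] (p : X → ℝ) : Prop :=
  ∀ i, 0 ≤ p i

/-- `f` is a measure-preserving function from `(X, p)` to `(Y, q)`. -/
def IsMP {X Y : Type} [Fintype X] [Fintype Y] (p : X → ℝ) (q : Y → ℝ) (f : X → Y) : Prop :=
  ∀ j : Y, q j = ∑ i, if f i = j then p i else 0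

/-- Shannon entropy (with the convention `0 * log 0 = 0`, automatic since `Real.log 0 = 0`). -/
noncomputable def shannon {X : Type} [Fintype X] (p : X → ℝ) : ℝ :=
  -∑ i, p i * Real.log (p i)

/-- The convex combination `λ p ⊕ (1 - λ) q` on the disjoint union. -/
noncomputable def cvx (lam : ℝ) {X Y : Type} (p : X → ℝ) (q : Y → ℝ) : X ⊕ Y → ℝ :=
  Sum.elim (fun i => lam * p i) (fun j => (1 - lam) * q j)

/-- The direct sum `p ⊕ q` on the disjoint union. -/
def dsum {X Y : Type} (p : X → ℝ) (q : Y → ℝ) : X ⊕ Y → ℝ :=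
  Sum.elim p q

/-- Extended Shannon entropy of a measure on a finite set. -/
noncomputable def shannonExt {X : Type} [Fintype X] (p : X → ℝ) : ℝ :=
  if (∑ i, p i) = 0 then 0 else (∑ i, p i) * shannon (fun i => p i / ∑ j, p j)

/-- Tsallis entropy of order `α` of a probability measure. -/
noncomputable def tsallis (α : ℝ) {X : Type} [Fintype X] (p : X → ℝ) : ℝ :=
  if α = 1 then shannon p else (1 / (α - 1)) * (1 - ∑ i, p i ^ α)

/-- Extended Tsallis entropy of order `α` of a measure on a finite set. -/
noncomputable def tsallisExt (α : ℝ) {X : Type} [Fintype X] (p : X → ℝ) : ℝ :=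
  if (∑ i, p i) = 0 then 0 else (∑ i, p i) ^ α * tsallis α (fun i => p i / ∑ j, p j)

/-- The conditions of the reformulated Faddeev theorem (Theorem 5):
nonnegativity, bijection-invariance, continuity, vanishing on a point,
and strong additivity. -/
def FaddeevConds (I : ∀ {X : Type} [Fintype X], (X → ℝ) → ℝ) : Prop :=
  (∀ {X : Type} [Fintype X] (p : X → ℝ), IsProb p → 0 ≤ I p) ∧
  (∀ {X X' : Type} [Fintype X] [Fintype X'] (e : X ≃ X') (p : X → ℝ),
    IsProb p → I (fun j => p (e.symm j)) = I p) ∧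
  (∀ n : ℕ, ContinuousOn (fun p : Fin n → ℝ => I p) {p | IsProb p}) ∧
  (I (fun _ : Fin 1 => (1 : ℝ)) = 0) ∧
  (∀ (n : ℕ) (Xs : Fin n → Type) [∀ i, Fintype (Xs i)]
    (p : Fin n → ℝ) (q : ∀ i, Xs i → ℝ),
    IsProb p → (∀ i, IsProb (q i)) →
    I (fun x : Σ i, Xs i => p x.1 * q x.1 x.2) = I p + ∑ i, p i * I (q i))

section ShannonLemmas

lemma shannon_eq_sum_negMulLog {X : Type} [Fintype X] (p : X → ℝ) :
    shannon p = ∑ i, Real.negMulLog (p i) := by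
  simp [shannon, Real.negMulLog, Finset.sum_neg_distrib]

lemma shannon_nonneg {X : Type} [Fintype X] (p : X → ℝ) (hp : IsProb p) : 0 ≤ shannon p := by
  rw [shannon_eq_sum_negMulLog]
  apply Finset.sum_nonneg
  intro i _
  refine Real.negMulLog_nonneg (hp.1 i) ?_
  calc p i ≤ ∑ j, p j := Finset.single_le_sum (fun j _ => hp.1 j) (Finset.mem_univ i)
  _ = 1 := hp.2

lemma shannon_comp_equiv {X X' : Type} [Fintype X] [Fintype X'] (e : X ≃ X') (p : X → ℝ) :
    shannon (fun j => p (e.symm j)) = shannon p := by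
  unfold shannon
  congr 1
  exact Equiv.sum_comp e.symm (fun i => p i * Real.log (p i))

lemma continuous_shannon (n : ℕ) : Continuous (fun p : Fin n → ℝ => shannon p) := by
  have : (fun p : Fin n → ℝ => shannon p) = fun p => ∑ i, Real.negMulLog (p i) := by
    funext p; exact shannon_eq_sum_negMulLog p
  rw [this]
  exact continuous_finset_sum _ fun i _ =>
    Real.continuous_negMulLog.comp (continuous_apply i)

lemma shannon_one : shannon (fun _ : Fin 1 => (1 : ℝ)) = 0 := by
  simp [shannon]

lemma mul_mul_log_mul (x y : ℝ) :
    x * y * Real.log (x * y) = x * y * Real.log x + x * y * Real.log y := by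
  rcases eq_or_ne x 0 with hx | hx
  · simp [hx]
  rcases eq_or_ne y 0 with hy | hy
  · simp [hy]
  rw [Real.log_mul hx hy]; ring

lemma shannon_additive (n : ℕ) (Xs : Fin n → Type) [∀ i, Fintype (Xs i)]
    (p : Fin n → ℝ) (q : ∀ i, Xs i → ℝ)
    (hp : IsProb p) (hq : ∀ i, IsProb (q i)) :
    shannon (fun x : Σ i, Xs i => p x.1 * q x.1 x.2) = shannon p + ∑ i, p i * shannon (q i) := by
  unfold shannon
  rw [← Finset.univ_sigma_univ, Finset.sum_sigma]
  have : ∀ i ∈ Finset.univ, ∑ j : Xs i,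
      (p i * q i j * Real.log (p i * q i j)) =
      p i * Real.log (p i) + p i * ∑ j : Xs i, q i j * Real.log (q i j) := by
    intro i _
    have : ∀ j : Xs i, p i * q i j * Real.log (p i * q i j)
        = p i * Real.log (p i) * q i j + p i * (q i j * Real.log (q i j)) := by
      intro j; rw [mul_mul_log_mul]; ring
    rw [Finset.sum_congr rfl fun j _ => this j, Finset.sum_add_distrib, ← Finset.mul_sum,
      ← Finset.mul_sum, (hq i).2]
    ring
  rw [Finset.sum_congr rfl this, Finset.sum_add_distrib]
  rw [neg_add]
  congr 1
  rw [← Finset.sum_neg_distrib]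
  exact Finset.sum_congr rfl fun i _ => by ring

lemma isProb_joint (n : ℕ) (Xs : Fin n → Type) [∀ i, Fintype (Xs i)]
    (p : Fin n → ℝ) (q : ∀ i, Xs i → ℝ)
    (hp : IsProb p) (hq : ∀ i, IsProb (q i)) :
    IsProb (fun x : Σ i, Xs i => p x.1 * q x.1 x.2) := by
  constructor
  · intro x; exact mul_nonneg (hp.1 _) ((hq _).1 _)
  · rw [← Finset.univ_sigma_univ, Finset.sum_sigma]
    have : ∀ i ∈ Finset.univ, ∑ j : Xs i, p i * q i j = p i := by
      intro i _; rw [← Finset.mul_sum, (hq i).2, mul_one]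
    rw [Finset.sum_congr rfl this, hp.2]

lemma faddeev_conds_shannon (c : ℝ) (hc : 0 ≤ c) :
    FaddeevConds (fun {X : Type} [Fintype X] (p : X → ℝ) => c * shannon p) := by
  refine ⟨?_, ?_, ?_, ?_, ?_⟩
  · intro X _ p hp; exact mul_nonneg hc (shannon_nonneg p hp)
  · intro X X' _ _ e p _; dsimp only; rw [shannon_comp_equiv]
  · intro n; exact ((continuous_shannon n).const_smul c).continuousOn
  · dsimp only; rw [shannon_one, mul_zero]
  · intro n Xs _ p q hp hq
    dsimp only
    rw [shannon_additive n Xs p q hp hq, mul_add, Finset.mul_sum]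
    congr 1
    exact Finset.sum_congr rfl fun i _ => by ring

end ShannonLemmas
section Forward

variable (I : ∀ {X : Type} [Fintype X], (X → ℝ) → ℝ)

/-- value of I on the uniform distribution on n points -/
noncomputable def fI (n : ℕ) : ℝ := I (fun _ : Fin n => (n : ℝ)⁻¹)

/-- point mass distribution -/
noncomputable def ptP (n : ℕ) : Fin n → ℝ := fun j => if j.val = 0 then 1 else 0

/-- the two point distribution (n/(n+1), 1/(n+1)) -/
noncomputable def pairP (n : ℕ) : Fin 2 → ℝ :=
  fun j => if j.val = 0 then (n : ℝ)/(n+1) else 1/(n+1)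

noncomputable def epsI (n : ℕ) : ℝ := I (pairP n)

lemma sum_pt (n : ℕ) (hn : 0 < n) :
    ∑ j : Fin n, (if (j : Fin n).val = 0 then (1:ℝ) else 0) = 1 := by
  rw [Finset.sum_eq_single_of_mem (⟨0, hn⟩ : Fin n) (Finset.mem_univ _)]
  · simp
  · intro b _ hb
    simp only [ite_eq_right_iff]
    intro hb0
    exact absurd (Fin.ext hb0) hb

lemma isProb_pt (n : ℕ) (hn : 0 < n) : IsProb (ptP n) := by
  refine ⟨fun i => by unfold ptP; positivity, sum_pt n hn⟩

lemma isProb_unif (n : ℕ) (hn : 0 < n) : IsProb (fun _ : Fin n => (n : ℝ)⁻¹) := by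
  refine ⟨fun i => by positivity, ?_⟩
  rw [Finset.sum_const, Finset.card_univ, Fintype.card_fin, nsmul_eq_mul,
    mul_inv_cancel₀ (by positivity)]

lemma isProb_pair (n : ℕ) : IsProb (pairP n) := by
  have h1 : ((n:ℝ) + 1) ≠ 0 := by positivity
  refine ⟨fun i => ?_, ?_⟩
  · unfold pairP; positivity
  · rw [Fin.sum_univ_two]
    unfold pairP
    norm_num
    field_simp

lemma I_const (hI : FaddeevConds I) {X : Type} [Fintype X] (p : X → ℝ)
    (h : ∀ x, p x = (Fintype.card X : ℝ)⁻¹) (hc : 0 < Fintype.card X) :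
    I p = fI I (Fintype.card X) := by
  have hprob : IsProb p := by
    refine ⟨fun i => by rw [h]; positivity, ?_⟩
    rw [Finset.sum_congr rfl fun i _ => h i, Finset.sum_const, Finset.card_univ, nsmul_eq_mul,
      mul_inv_cancel₀ (by positivity)]
  have h2 : I (fun j => p ((Fintype.equivFin X).symm j)) = I p := hI.2.1 (Fintype.equivFin X) p hprob
  rw [← h2]
  congr 1
  funext j
  rw [h]

lemma I_pt_card (hI : FaddeevConds I) {X : Type} [Fintype X] (p : X → ℝ) (x0 : X) (hp0 : p x0 = 1)
    (hp : ∀ x, x ≠ x0 → p x = 0) (n : ℕ) (hc : Fintype.card X = n + 1) :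
    I p = I (ptP (n+1)) := by
  have hprob : IsProb p := by
    refine ⟨fun i => ?_, ?_⟩
    · rcases eq_or_ne i x0 with h | h
      · rw [h, hp0]; norm_num
      · rw [hp i h]
    · rw [Finset.sum_eq_single_of_mem x0 (Finset.mem_univ _) (fun b _ hb => hp b hb), hp0]
  obtain ⟨e, he⟩ : ∃ e : X ≃ Fin (n+1), e x0 = 0 :=
    ⟨(Fintype.equivFinOfCardEq hc).trans (Equiv.swap ((Fintype.equivFinOfCardEq hc) x0) 0),
      by simp [Equiv.swap_apply_left]⟩
  have h2 : I (fun j => p (e.symm j)) = I p := hI.2.1 e p hprob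
  rw [← h2]
  congr 1
  funext j
  rcases eq_or_ne (e.symm j) x0 with h | h
  · rw [h, hp0]
    have hj : j = 0 := by rw [← he, ← h, Equiv.apply_symm_apply]
    rw [hj]
    simp [ptP]
  · rw [hp _ h]
    have hj : j ≠ 0 := by
      intro hj0
      apply h
      rw [hj0, ← he, Equiv.symm_apply_apply]
    have hv : (j:ℕ) ≠ 0 := fun hv => hj (Fin.ext (by simpa using hv))
    simp [ptP, hv]

end Forward
section Forward2

variable (I : ∀ {X : Type} [Fintype X], (X → ℝ) → ℝ)

lemma fI_one (hI : FaddeevConds I) : fI I 1 = 0 := by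
  have h : (fun _ : Fin 1 => ((1:ℕ):ℝ)⁻¹) = fun _ : Fin 1 => (1:ℝ) := by
    funext _; norm_num
  unfold fI
  rw [h]
  exact hI.2.2.2.1

lemma I_pt2 (hI : FaddeevConds I) : I (ptP 2) = 0 := by
  have hpt2 : IsProb (ptP 2) := isProb_pt 2 (by norm_num)
  have hone : I (fun _ : Fin 1 => (1:ℝ)) = 0 := hI.2.2.2.1
  -- computation A : fibers of sizes (2,1)
  have hA : I (fun x : Σ i : Fin 2, Fin (2 - i.val) => ptP 2 x.1 * (if x.2.val = 0 then 1 else 0))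
      = I (ptP 2) + ∑ i : Fin 2, ptP 2 i *
          I (fun j : Fin (2 - i.val) => if j.val = 0 then (1:ℝ) else 0) :=
    hI.2.2.2.2 2 (fun i => Fin (2 - i.val)) (ptP 2)
      (fun i j => if j.val = 0 then (1:ℝ) else 0) hpt2
      (fun i => isProb_pt (2 - i.val) (by omega))
  -- computation B : fibers of sizes (1,2)
  have hB : I (fun x : Σ i : Fin 2, Fin (1 + i.val) => ptP 2 x.1 * (if x.2.val = 0 then 1 else 0))
      = I (ptP 2) + ∑ i : Fin 2, ptP 2 i *
          I (fun j : Fin (1 + i.val) => if j.val = 0 then (1:ℝ) else 0) :=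
    hI.2.2.2.2 2 (fun i => Fin (1 + i.val)) (ptP 2)
      (fun i j => if j.val = 0 then (1:ℝ) else 0) hpt2
      (fun i => isProb_pt (1 + i.val) (by omega))
  have hcardA : Fintype.card (Σ i : Fin 2, Fin (2 - i.val)) = 2 + 1 := by
    simp [Fintype.card_sigma, Fin.sum_univ_two]
  have hcardB : Fintype.card (Σ i : Fin 2, Fin (1 + i.val)) = 2 + 1 := by
    simp [Fintype.card_sigma, Fin.sum_univ_two]
  have hptA : I (fun x : Σ i : Fin 2, Fin (2 - i.val) =>
      ptP 2 x.1 * (if x.2.val = 0 then 1 else 0)) = I (ptP 3) :=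
    I_pt_card I hI _ (⟨0, ⟨0, by norm_num⟩⟩ : Σ i : Fin 2, Fin (2 - i.val))
      (by simp [ptP]) (by
        rintro ⟨i, j⟩ hne
        dsimp only
        rcases eq_or_ne i.val 0 with hi | hi
        · rcases eq_or_ne j.val 0 with hj | hj
          · exfalso
            obtain rfl : i = 0 := Fin.ext hi
            exact hne (congrArg (Sigma.mk 0) (Fin.ext (by simpa using hj)))
          · simp [hj]
        · simp [ptP, hi]) 2 hcardA
  have hptB : I (fun x : Σ i : Fin 2, Fin (1 + i.val) =>
      ptP 2 x.1 * (if x.2.val = 0 then 1 else 0)) = I (ptP 3) :=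
    I_pt_card I hI _ (⟨0, ⟨0, by norm_num⟩⟩ : Σ i : Fin 2, Fin (1 + i.val))
      (by simp [ptP]) (by
        rintro ⟨i, j⟩ hne
        dsimp only
        rcases eq_or_ne i.val 0 with hi | hi
        · rcases eq_or_ne j.val 0 with hj | hj
          · exfalso
            obtain rfl : i = 0 := Fin.ext hi
            exact hne (congrArg (Sigma.mk 0) (Fin.ext (by simpa using hj)))
          · simp [hj]
        · simp [ptP, hi]) 2 hcardB
  have hsumA : ∑ i : Fin 2, ptP 2 i *
      I (fun j : Fin (2 - i.val) => if j.val = 0 then (1:ℝ) else 0) = I (ptP 2) := by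
    rw [Fin.sum_univ_two]
    have e0 : I (fun j : Fin (2 - (0 : Fin 2).val) => if j.val = 0 then (1:ℝ) else 0)
        = I (ptP 2) := rfl
    rw [e0]
    simp [ptP]
  have hsumB : ∑ i : Fin 2, ptP 2 i *
      I (fun j : Fin (1 + i.val) => if j.val = 0 then (1:ℝ) else 0) = 0 := by
    rw [Fin.sum_univ_two]
    have e0 : I (fun j : Fin (1 + (0 : Fin 2).val) => if j.val = 0 then (1:ℝ) else 0)
        = I (fun _ : Fin 1 => (1:ℝ)) := by
      congr 1
      funext j
      rw [if_pos (by omega)]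
    rw [e0, hone]
    simp [ptP]
  rw [hptA, hsumA] at hA
  rw [hptB, hsumB] at hB
  have := hA.symm.trans hB
  linarith

lemma fI_succ (hI : FaddeevConds I) (n : ℕ) (hn : 0 < n) :
    fI I (n+1) = epsI I n + ((n:ℝ)/(n+1)) * fI I n := by
  have hnR : (0:ℝ) < n := by exact_mod_cast hn
  set m : Fin 2 → ℕ := fun i => if i.val = 0 then n else 1 with hm
  have hmpos : ∀ i, 0 < m i := by intro i; dsimp [m]; split <;> omega
  have hadd : I (fun x : Σ i : Fin 2, Fin (m i) => pairP n x.1 * ((m x.1 : ℕ):ℝ)⁻¹)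
      = I (pairP n) + ∑ i : Fin 2, pairP n i * I (fun _ : Fin (m i) => ((m i : ℕ):ℝ)⁻¹) :=
    hI.2.2.2.2 2 (fun i => Fin (m i)) (pairP n)
      (fun i _ => ((m i : ℕ):ℝ)⁻¹) (isProb_pair n) (fun i => isProb_unif _ (hmpos i))
  have hcard : Fintype.card (Σ i : Fin 2, Fin (m i)) = n + 1 := by
    simp [Fintype.card_sigma, Fin.sum_univ_two, m]
  have hconst : ∀ x : Σ i : Fin 2, Fin (m i),
      pairP n x.1 * ((m x.1 : ℕ):ℝ)⁻¹ = ((Fintype.card (Σ i : Fin 2, Fin (m i)) : ℕ):ℝ)⁻¹ := by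
    rintro ⟨i, j⟩
    rw [hcard]
    dsimp only
    rcases eq_or_ne i.val 0 with hi | hi
    · simp only [pairP, m, hi, if_pos]
      push_cast
      field_simp
    · simp only [pairP, m, hi, if_neg]
      push_cast
      field_simp
  have hIc0 := I_const I hI _ hconst (by rw [hcard]; omega)
  have hIc : I (fun x : Σ i : Fin 2, Fin (m i) => pairP n x.1 * ((m x.1 : ℕ):ℝ)⁻¹)
      = fI I (Fintype.card (Σ i : Fin 2, Fin (m i))) := hIc0
  rw [hcard] at hIc
  have key : fI I (n+1)
      = I (pairP n) + ∑ i : Fin 2, pairP n i * I (fun _ : Fin (m i) => ((m i : ℕ):ℝ)⁻¹) :=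
    hIc.symm.trans hadd
  have key2 : fI I (n+1) = epsI I n + (pairP n 0 * fI I (m 0) + pairP n 1 * fI I (m 1)) := by
    rw [key, Fin.sum_univ_two]; rfl
  have hm0 : m 0 = n := by simp [m]
  have hm1 : m 1 = 1 := by simp [m]
  rw [hm0, hm1, fI_one I hI] at key2
  have hp0 : pairP n 0 = (n:ℝ)/(n+1) := by simp [pairP]
  have hp1 : pairP n 1 = 1/(n+1) := by simp [pairP]
  rw [hp0, hp1] at key2
  rw [key2]; ring

lemma fI_mul (hI : FaddeevConds I) (a b : ℕ) (ha : 0 < a) (hb : 0 < b) :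
    fI I (a*b) = fI I a + fI I b := by
  have haR : (0:ℝ) < a := by exact_mod_cast ha
  have hadd : I (fun x : Σ _ : Fin a, Fin b => (fun _ : Fin a => ((a:ℕ):ℝ)⁻¹) x.1 * ((b:ℕ):ℝ)⁻¹)
      = I (fun _ : Fin a => ((a:ℕ):ℝ)⁻¹)
        + ∑ _i : Fin a, ((a:ℕ):ℝ)⁻¹ * I (fun _ : Fin b => ((b:ℕ):ℝ)⁻¹) :=
    hI.2.2.2.2 a (fun _ => Fin b) (fun _ => ((a:ℕ):ℝ)⁻¹)
      (fun _ _ => ((b:ℕ):ℝ)⁻¹) (isProb_unif a ha) (fun _ => isProb_unif b hb)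
  have hcard : Fintype.card (Σ _ : Fin a, Fin b) = a * b := by
    simp [Fintype.card_sigma, Finset.sum_const, Finset.card_univ, mul_comm]
  have hconst : ∀ x : Σ _ : Fin a, Fin b,
      (fun _ : Fin a => ((a:ℕ):ℝ)⁻¹) x.1 * ((b:ℕ):ℝ)⁻¹
        = ((Fintype.card (Σ _ : Fin a, Fin b) : ℕ):ℝ)⁻¹ := by
    intro x
    rw [hcard]
    push_cast
    rw [mul_inv]
  have hIc0 := I_const I hI _ hconst (by rw [hcard]; positivity)
  have hIc : I (fun x : Σ _ : Fin a, Fin b => (fun _ : Fin a => ((a:ℕ):ℝ)⁻¹) x.1 * ((b:ℕ):ℝ)⁻¹)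
      = fI I (Fintype.card (Σ _ : Fin a, Fin b)) := hIc0
  rw [hcard] at hIc
  have key : fI I (a*b) = fI I a + ∑ _i : Fin a, ((a:ℕ):ℝ)⁻¹ * fI I b :=
    hIc.symm.trans hadd
  rw [key, Finset.sum_const, Finset.card_univ, Fintype.card_fin, nsmul_eq_mul]
  field_simp

lemma I_rat (hI : FaddeevConds I) (n : ℕ) (hn : 0 < n) (a : Fin n → ℕ) (ha : ∀ i, 0 < a i) :
    fI I (∑ j, a j) = I (fun i => (a i : ℝ) / ((∑ j, a j : ℕ):ℝ))
      + ∑ i, ((a i : ℝ) / ((∑ j, a j : ℕ):ℝ)) * fI I (a i) := by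
  set N : ℕ := ∑ j, a j with hN
  have hNpos : 0 < N := by
    rw [hN]
    exact Finset.sum_pos (fun i _ => ha i) ⟨⟨0, hn⟩, Finset.mem_univ _⟩
  have hNR : (0:ℝ) < N := by exact_mod_cast hNpos
  have hprob : IsProb (fun i : Fin n => (a i : ℝ) / (N:ℝ)) := by
    refine ⟨fun i => by positivity, ?_⟩
    rw [← Finset.sum_div]
    rw [show ∑ i : Fin n, (a i:ℝ) = (N:ℝ) by rw [hN]; push_cast; rfl]
    field_simp
  have hadd : I (fun x : Σ i : Fin n, Fin (a i) =>
        (fun i : Fin n => (a i : ℝ) / (N:ℝ)) x.1 * ((a x.1 : ℕ):ℝ)⁻¹)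
      = I (fun i : Fin n => (a i : ℝ) / (N:ℝ))
        + ∑ i, ((a i : ℝ) / (N:ℝ)) * I (fun _ : Fin (a i) => ((a i:ℕ):ℝ)⁻¹) :=
    hI.2.2.2.2 n (fun i => Fin (a i)) _ (fun i _ => ((a i:ℕ):ℝ)⁻¹) hprob
      (fun i => isProb_unif _ (ha i))
  have hcard : Fintype.card (Σ i : Fin n, Fin (a i)) = N := by
    simp [Fintype.card_sigma, hN]
  have hconst : ∀ x : Σ i : Fin n, Fin (a i),
      (fun i : Fin n => (a i : ℝ) / (N:ℝ)) x.1 * ((a x.1 : ℕ):ℝ)⁻¹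
        = ((Fintype.card (Σ i : Fin n, Fin (a i)) : ℕ):ℝ)⁻¹ := by
    rintro ⟨i, j⟩
    rw [hcard]
    dsimp only
    have : (0:ℝ) < a i := by exact_mod_cast ha i
    field_simp
  have hIc0 := I_const I hI _ hconst (by rw [hcard]; omega)
  have hIc : I (fun x : Σ i : Fin n, Fin (a i) =>
        (fun i : Fin n => (a i : ℝ) / (N:ℝ)) x.1 * ((a x.1 : ℕ):ℝ)⁻¹)
      = fI I (Fintype.card (Σ i : Fin n, Fin (a i))) := hIc0
  rw [hcard] at hIc
  exact hIc.symm.trans hadd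

end Forward2
section Forward3

variable (I : ∀ {X : Type} [Fintype X], (X → ℝ) → ℝ)

lemma epsI_nonneg (hI : FaddeevConds I) (n : ℕ) : 0 ≤ epsI I n := hI.1 _ (isProb_pair n)

lemma fI_nonneg (hI : FaddeevConds I) (n : ℕ) (hn : 0 < n) : 0 ≤ fI I n :=
  hI.1 _ (isProb_unif n hn)

lemma tendsto_epsI (hI : FaddeevConds I) : Tendsto (epsI I) atTop (𝓝 0) := by
  have hmem : IsProb (ptP 2) := isProb_pt 2 (by norm_num)
  have hc : ContinuousWithinAt (fun p : Fin 2 → ℝ => I p) {p | IsProb p} (ptP 2) :=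
    (hI.2.2.1 2).continuousWithinAt hmem
  have hlim : Tendsto (fun n : ℕ => pairP n) atTop (𝓝 (ptP 2)) := by
    rw [tendsto_pi_nhds]
    intro j
    rcases eq_or_ne j.val 0 with hj | hj
    · have h1 : (fun n : ℕ => pairP n j) = fun n : ℕ => (n:ℝ)/(n+1) := by
        funext n; simp [pairP, hj]
      have h2 : ptP 2 j = 1 := by simp [ptP, hj]
      rw [h1, h2]
      have := tendsto_natCast_div_add_atTop (1 : ℝ)
      simpa using this
    · have h1 : (fun n : ℕ => pairP n j) = fun n : ℕ => 1/((n:ℝ)+1) := by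
        funext n; simp [pairP, hj]
      have h2 : ptP 2 j = 0 := by simp [ptP, hj]
      rw [h1, h2]
      exact tendsto_one_div_add_atTop_nhds_zero_nat
  have hin : ∀ n : ℕ, pairP n ∈ {p : Fin 2 → ℝ | IsProb p} := fun n => isProb_pair n
  have := hc.tendsto.comp (tendsto_nhdsWithin_iff.mpr ⟨hlim, Filter.Eventually.of_forall hin⟩)
  have h0 : I (ptP 2) = 0 := I_pt2 I hI
  rw [h0] at this
  exact this

lemma fI_formula (hI : FaddeevConds I) (n : ℕ) :
    ((n+1:ℕ):ℝ) * fI I (n+1) = ∑ k ∈ Finset.range n, ((k+2:ℕ):ℝ) * epsI I (k+1) := by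
  induction n with
  | zero => simp [fI_one I hI]
  | succ n ih =>
    rw [Finset.sum_range_succ, ← ih]
    have hs := fI_succ I hI (n+1) (by omega)
    rw [hs]
    push_cast
    field_simp
    ring

lemma tendsto_fI_div (hI : FaddeevConds I) :
    Tendsto (fun n : ℕ => fI I n / n) atTop (𝓝 0) := by
  rw [← tendsto_add_atTop_iff_nat 1]
  have hces : Tendsto (fun m : ℕ => (∑ k ∈ Finset.range m, epsI I (k+1)) / m) atTop (𝓝 0) := by
    have h1 : Tendsto (fun k : ℕ => epsI I (k+1)) atTop (𝓝 0) :=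
      (tendsto_epsI I hI).comp (tendsto_add_atTop_nat 1)
    exact h1.cesaro.congr (fun n => by rw [inv_mul_eq_div])
  apply squeeze_zero' (g := fun m : ℕ => (∑ k ∈ Finset.range m, epsI I (k+1)) / m)
  · filter_upwards [Filter.eventually_ge_atTop 1] with m _
    have h := fI_nonneg I hI (m+1) (by omega)
    have : (0:ℝ) ≤ ((m+1:ℕ):ℝ) := by positivity
    exact div_nonneg h this
  · filter_upwards [Filter.eventually_ge_atTop 1] with m hm
    have hform := fI_formula I hI m
    have hmR : (0:ℝ) < m := by exact_mod_cast hm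
    have hm1 : (0:ℝ) < (m:ℝ)+1 := by positivity
    set S := ∑ k ∈ Finset.range m, ((k+2:ℕ):ℝ) * epsI I (k+1) with hS
    set E := ∑ k ∈ Finset.range m, epsI I (k+1) with hE
    have hEnn : 0 ≤ E := Finset.sum_nonneg fun k _ => epsI_nonneg I hI (k+1)
    have hfIm : fI I (m+1) / (((m+1:ℕ)):ℝ) = S / (((m:ℝ)+1)*((m:ℝ)+1)) := by
      rw [← hform]
      push_cast
      field_simp
    have hsum_le : S ≤ ((m:ℝ)+1) * E := by
      rw [hE, Finset.mul_sum, hS]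
      apply Finset.sum_le_sum
      intro k hk
      have hk' : k < m := Finset.mem_range.mp hk
      have h2 : ((k+2:ℕ):ℝ) ≤ (m:ℝ)+1 := by
        have : (k+2:ℕ) ≤ m+1 := by omega
        exact_mod_cast this
      exact mul_le_mul_of_nonneg_right h2 (epsI_nonneg I hI (k+1))
    rw [hfIm]
    calc S / (((m:ℝ)+1)*((m:ℝ)+1)) ≤ (((m:ℝ)+1) * E) / (((m:ℝ)+1)*((m:ℝ)+1)) := by
          gcongr
    _ = E / ((m:ℝ)+1) := by
          rw [mul_div_mul_left _ _ (ne_of_gt hm1)]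
    _ ≤ E / (m:ℝ) := by gcongr; linarith
  · exact hces

lemma tendsto_delta (hI : FaddeevConds I) :
    Tendsto (fun n : ℕ => fI I (n+1) - fI I n) atTop (𝓝 0) := by
  have h1 : Tendsto (fun n : ℕ => fI I n / ((n:ℝ)+1)) atTop (𝓝 0) := by
    apply squeeze_zero' (g := fun n : ℕ => fI I n / n)
    · filter_upwards [Filter.eventually_ge_atTop 1] with n hn
      exact div_nonneg (fI_nonneg I hI n (by omega)) (by positivity)
    · filter_upwards [Filter.eventually_ge_atTop 1] with n hn
      have hnR : (0:ℝ) < n := by exact_mod_cast hn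
      have h := fI_nonneg I hI n (by omega)
      gcongr
      linarith
    · exact tendsto_fI_div I hI
  have heq : (fun n : ℕ => epsI I n - fI I n/((n:ℝ)+1)) =ᶠ[atTop]
      (fun n : ℕ => fI I (n+1) - fI I n) := by
    filter_upwards [Filter.eventually_ge_atTop 1] with n hn
    have hs := fI_succ I hI n (by omega)
    rw [hs]
    have hnR : (0:ℝ) < n := by exact_mod_cast hn
    field_simp
    ring
  have h2 := (tendsto_epsI I hI).sub h1
  rw [sub_zero] at h2
  exact h2.congr' heq

end Forward3
section Forward4

variable (I : ∀ {X : Type} [Fintype X], (X → ℝ) → ℝ)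

lemma fI_pow (hI : FaddeevConds I) (n : ℕ) (hn : 0 < n) (k : ℕ) :
    fI I (n^k) = (k:ℝ) * fI I n := by
  induction k with
  | zero => simpa using fI_one I hI
  | succ k ih =>
    rw [pow_succ, fI_mul I hI _ n (by positivity) hn, ih]
    push_cast
    ring

lemma dyadic_bound (hI : FaddeevConds I) (ε : ℝ) (hε : 0 ≤ ε) (T : ℕ) (hT : 1 ≤ T)
    (hδ : ∀ j, T ≤ j → |fI I (j+1) - fI I j| ≤ ε) :
    ∀ N, 1 ≤ N → |fI I N - (Nat.log 2 N : ℝ) * fI I 2|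
      ≤ ε * (Nat.log 2 N : ℝ)
        + ∑ k ∈ Finset.range (2*T+2), |fI I k - (Nat.log 2 k : ℝ) * fI I 2| := by
  intro N
  induction N using Nat.strong_induction_on with
  | _ N ih =>
    intro hN1
    set C := ∑ k ∈ Finset.range (2*T+2), |fI I k - (Nat.log 2 k : ℝ) * fI I 2| with hC
    by_cases hsmall : N < 2*T+2
    · have hmem : N ∈ Finset.range (2*T+2) := Finset.mem_range.mpr hsmall
      have h1 : |fI I N - (Nat.log 2 N : ℝ) * fI I 2| ≤ C :=
        Finset.single_le_sum (f := fun k => |fI I k - (Nat.log 2 k : ℝ) * fI I 2|)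
          (fun k _ => abs_nonneg _) hmem
      have h2 : 0 ≤ ε * ((Nat.log 2 N : ℕ):ℝ) := mul_nonneg hε (by positivity)
      linarith
    · push_neg at hsmall
      set M := N / 2 with hM
      have hM1 : 1 ≤ M := by omega
      have hMT : T ≤ M := by omega
      have hMN : M < N := by omega
      have hlog : Nat.log 2 N = Nat.log 2 M + 1 := by
        have h2 : Nat.log 2 M = Nat.log 2 N - 1 := by rw [hM]; exact Nat.log_div_base 2 N
        have hpos : 0 < Nat.log 2 N := Nat.log_pos (by norm_num) (by omega)
        omega
      have hmul : fI I (2*M) = fI I 2 + fI I M := fI_mul I hI 2 M (by norm_num) hM1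
      have hstep : |fI I N - fI I 2 - fI I M| ≤ ε := by
        have hcase : N = 2*M ∨ N = 2*M+1 := by omega
        rcases hcase with h | h
        · rw [h, hmul]
          simpa using hε
        · rw [h]
          have he : fI I (2*M+1) - fI I 2 - fI I M = fI I (2*M+1) - fI I (2*M) := by
            rw [hmul]; ring
          rw [he]
          exact hδ (2*M) (by omega)
      have hih := ih M hMN hM1
      rw [hlog]
      push_cast
      have habs : |fI I N - ((Nat.log 2 M:ℝ) + 1) * fI I 2|
          ≤ |fI I N - fI I 2 - fI I M| + |fI I M - (Nat.log 2 M:ℝ) * fI I 2| := by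
        have he : fI I N - ((Nat.log 2 M:ℝ)+1) * fI I 2
            = (fI I N - fI I 2 - fI I M) + (fI I M - (Nat.log 2 M:ℝ) * fI I 2) := by ring
        rw [he]; exact abs_add_le _ _
      linarith

lemma fI_eq_log (hI : FaddeevConds I) (n : ℕ) (hn : 1 ≤ n) :
    fI I n = (fI I 2 / Real.log 2) * Real.log n := by
  rcases eq_or_lt_of_le hn with h1 | h2
  · rw [← h1]
    simp [fI_one I hI]
  · have hn2 : 2 ≤ n := h2
    have hlog2 : (0:ℝ) < Real.log 2 := Real.log_pos (by norm_num)
    have hlogn : Real.log 2 ≤ Real.log n := by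
      apply Real.log_le_log (by norm_num)
      exact_mod_cast hn2
    set A := fI I n with hA
    set B := fI I 2 with hB
    set D := Real.log n / Real.log 2 with hD
    have hD1 : 1 ≤ D := (one_le_div hlog2).mpr hlogn
    have hgoal : (B / Real.log 2) * Real.log n = D * B := by rw [hD]; ring
    rw [hgoal]
    apply eq_of_forall_dist_le
    intro ε hε
    rw [Real.dist_eq]
    set ε' := ε / (2*(D+1)) with hε'
    have hε'pos : 0 < ε' := by positivity
    obtain ⟨T0, hT0⟩ := (Metric.tendsto_atTop.mp (tendsto_delta I hI)) ε' hε'pos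
    set T := max T0 1 with hT
    have hδ : ∀ j, T ≤ j → |fI I (j+1) - fI I j| ≤ ε' := by
      intro j hj
      have h := hT0 j (le_trans (le_max_left _ _) hj)
      rw [Real.dist_eq, sub_zero] at h
      exact h.le
    set C := ∑ k ∈ Finset.range (2*T+2), |fI I k - (Nat.log 2 k:ℝ) * fI I 2| with hC
    have hCnn : 0 ≤ C := Finset.sum_nonneg fun k _ => abs_nonneg _
    obtain ⟨k0, hk0⟩ := exists_nat_gt (2*(C + |B|)/ε)
    set k := max k0 1 with hk
    have hk1 : 1 ≤ k := le_max_right _ _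
    have hrk : (0:ℝ) < (k:ℝ) := by exact_mod_cast hk1
    have hkk0 : (k0:ℝ) ≤ (k:ℝ) := by exact_mod_cast le_max_left _ _
    -- the dyadic bound at N = n^k
    have hNk1 : 1 ≤ n^k := Nat.one_le_pow _ _ (by omega)
    set a := Nat.log 2 (n^k) with ha
    have hbd := dyadic_bound I hI ε' hε'pos.le T (le_max_right _ _) hδ (n^k) hNk1
    rw [fI_pow I hI n (by omega) k] at hbd
    -- bounds on a
    have hle1 : (a:ℝ) * Real.log 2 ≤ (k:ℝ) * Real.log n := by
      have h1 : (2:ℕ)^a ≤ n^k := Nat.pow_log_le_self 2 (by positivity)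
      have h2 : ((2:ℝ))^a ≤ ((n:ℝ))^k := by exact_mod_cast h1
      have h3 := Real.log_le_log (by positivity) h2
      rwa [Real.log_pow, Real.log_pow] at h3
    have hlt2 : (k:ℝ) * Real.log n < ((a:ℝ)+1) * Real.log 2 := by
      have h1 : n^k < 2^(a+1) := Nat.lt_pow_succ_log_self (by norm_num) (n^k)
      have h2 : ((n:ℝ))^k < ((2:ℝ))^(a+1) := by exact_mod_cast h1
      have h3 := Real.log_lt_log (by positivity) h2
      rw [Real.log_pow, Real.log_pow] at h3
      push_cast at h3 ⊢
      linarith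
    have haD : (a:ℝ) ≤ (k:ℝ) * D := by
      rw [hD, mul_div_assoc', le_div_iff₀ hlog2]
      exact hle1
    have hDa : (k:ℝ) * D < (a:ℝ) + 1 := by
      rw [hD, mul_div_assoc', div_lt_iff₀ hlog2]
      exact hlt2
    have hmain : (k:ℝ) * |A - D*B| ≤ ε' * ((k:ℝ)*D) + C + |B| := by
      have e1 : (k:ℝ) * |A - D*B| = |(k:ℝ)*A - (k:ℝ)*D*B| := by
        rw [show (k:ℝ)*A - (k:ℝ)*D*B = (k:ℝ)*(A - D*B) by ring, abs_mul, abs_of_pos hrk]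
      have e2 : |(k:ℝ)*A - (k:ℝ)*D*B| ≤ |(k:ℝ)*A - (a:ℝ)*B| + |(a:ℝ) - (k:ℝ)*D| * |B| := by
        calc |(k:ℝ)*A - (k:ℝ)*D*B| = |((k:ℝ)*A - (a:ℝ)*B) + (((a:ℝ) - (k:ℝ)*D)*B)| := by
              congr 1; ring
        _ ≤ |(k:ℝ)*A - (a:ℝ)*B| + |((a:ℝ) - (k:ℝ)*D)*B| := abs_add_le _ _
        _ = |(k:ℝ)*A - (a:ℝ)*B| + |(a:ℝ) - (k:ℝ)*D| * |B| := by rw [abs_mul]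
      have e3 : |(a:ℝ) - (k:ℝ)*D| ≤ 1 := by
        rw [abs_le]
        constructor <;> linarith
      have e4 : |(k:ℝ)*A - (a:ℝ)*B| ≤ ε' * (a:ℝ) + C := hbd
      have e5 : |(a:ℝ) - (k:ℝ)*D| * |B| ≤ 1 * |B| :=
        mul_le_mul_of_nonneg_right e3 (abs_nonneg B)
      have e6 : ε' * (a:ℝ) ≤ ε' * ((k:ℝ)*D) := mul_le_mul_of_nonneg_left haD hε'pos.le
      rw [e1]
      linarith
    have hdiv : |A - D*B| ≤ ε' * D + (C + |B|)/(k:ℝ) := by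
      rw [← mul_le_mul_iff_right₀ hrk]
      calc (k:ℝ) * |A - D*B| ≤ ε' * ((k:ℝ)*D) + C + |B| := hmain
      _ = (k:ℝ) * (ε'*D) + (C+|B|) := by ring
      _ = (k:ℝ) * (ε'*D + (C+|B|)/(k:ℝ)) := by field_simp
    have h5 : ε' * D ≤ ε/2 := by
      rw [hε', div_mul_eq_mul_div, div_le_div_iff₀ (by positivity) (by norm_num : (0:ℝ) < 2)]
      nlinarith [hε.le, hD1]
    have h6 : (C + |B|)/(k:ℝ) ≤ ε/2 := by
      rw [div_le_iff₀ hrk]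
      have h7 : 2*(C+|B|)/ε < (k:ℝ) := lt_of_lt_of_le hk0 hkk0
      rw [div_lt_iff₀ hε] at h7
      nlinarith [abs_nonneg B, hCnn]
    linarith

end Forward4
section Forward5

variable (I : ∀ {X : Type} [Fintype X], (X → ℝ) → ℝ)

lemma I_rat_shannon (hI : FaddeevConds I) (n : ℕ) (hn : 0 < n) (a : Fin n → ℕ)
    (ha : ∀ i, 0 < a i) :
    I (fun i => (a i : ℝ) / ((∑ j, a j : ℕ):ℝ))
      = (fI I 2 / Real.log 2) * shannon (fun i => (a i : ℝ) / ((∑ j, a j : ℕ):ℝ)) := by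
  have hNpos : 0 < ∑ j, a j := Finset.sum_pos (fun i _ => ha i) ⟨⟨0,hn⟩, Finset.mem_univ _⟩
  have hNR : (0:ℝ) < ((∑ j, a j : ℕ):ℝ) := by exact_mod_cast hNpos
  have hkey := I_rat I hI n hn a ha
  have hsum1 : ∑ i, (a i : ℝ)/((∑ j, a j : ℕ):ℝ) = 1 := by
    rw [← Finset.sum_div]
    have hpos : (0:ℝ) < ∑ i : Fin n, (a i:ℝ) := by
      have : ((∑ j, a j : ℕ):ℝ) = ∑ i : Fin n, (a i:ℝ) := by push_cast; rfl
      linarith [hNR, this]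
    rw [show ((∑ j, a j:ℕ):ℝ) = ∑ i : Fin n, (a i:ℝ) by push_cast; rfl]
    exact div_self hpos.ne'
  have hIp : I (fun i => (a i : ℝ) / ((∑ j, a j : ℕ):ℝ))
      = fI I (∑ j, a j) - ∑ i, ((a i:ℝ)/((∑ j, a j:ℕ):ℝ)) * fI I (a i) := by
    linarith [hkey]
  have hsum2 : ∑ i, ((a i:ℝ)/((∑ j, a j:ℕ):ℝ)) * fI I (a i)
      = (fI I 2 / Real.log 2) * ∑ i, ((a i:ℝ)/((∑ j, a j:ℕ):ℝ)) * Real.log ((a i:ℕ):ℝ) := by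
    rw [Finset.mul_sum]
    apply Finset.sum_congr rfl
    intro i _
    rw [fI_eq_log I hI (a i) (ha i)]
    ring
  have hshan : shannon (fun i => (a i:ℝ)/((∑ j, a j:ℕ):ℝ))
      = Real.log ((∑ j, a j:ℕ):ℝ)
        - ∑ i, ((a i:ℝ)/((∑ j, a j:ℕ):ℝ)) * Real.log ((a i:ℕ):ℝ) := by
    unfold shannon
    have hterm : ∀ i ∈ Finset.univ,
        ((a i:ℝ)/((∑ j, a j:ℕ):ℝ)) * Real.log ((a i:ℝ)/((∑ j, a j:ℕ):ℝ))
          = ((a i:ℝ)/((∑ j, a j:ℕ):ℝ)) * Real.log ((a i:ℕ):ℝ)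
            - ((a i:ℝ)/((∑ j, a j:ℕ):ℝ)) * Real.log ((∑ j, a j:ℕ):ℝ) := by
      intro i _
      rw [Real.log_div (by exact_mod_cast (ha i).ne') (ne_of_gt hNR)]
      ring
    rw [Finset.sum_congr rfl hterm, Finset.sum_sub_distrib, ← Finset.sum_mul, hsum1, one_mul]
    ring
  rw [hIp, hsum2, hshan, fI_eq_log I hI _ (by omega)]
  ring

lemma I_eq_shannon_fin (hI : FaddeevConds I) (n : ℕ) (p : Fin n → ℝ) (hp : IsProb p) :
    I p = (fI I 2 / Real.log 2) * shannon p := by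
  rcases Nat.eq_zero_or_pos n with hn0 | hn
  · exfalso
    have h2 := hp.2
    subst hn0
    simp at h2
  set a : ℕ → Fin n → ℕ := fun k i => ⌊(k:ℝ) * p i⌋₊ + 1 with haDef
  have hapos : ∀ k i, 0 < a k i := fun k i => Nat.succ_pos _
  set d : ℕ → Fin n → ℝ := fun k i => (a k i : ℝ) / ((∑ j, a k j : ℕ):ℝ) with hdDef
  have hrat : ∀ k, I (d k) = (fI I 2 / Real.log 2) * shannon (d k) := fun k =>
    I_rat_shannon I hI n hn (a k) (fun i => hapos k i)
  have hNpos : ∀ k, 0 < ∑ j, a k j := fun k =>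
    Finset.sum_pos (fun i _ => hapos k i) ⟨⟨0,hn⟩, Finset.mem_univ _⟩
  have hprob : ∀ k, IsProb (d k) := by
    intro k
    have hNR : (0:ℝ) < ((∑ j, a k j : ℕ):ℝ) := by exact_mod_cast hNpos k
    constructor
    · intro i
      have : (0:ℝ) ≤ (a k i : ℝ) := by positivity
      exact div_nonneg this hNR.le
    · rw [← Finset.sum_div, show ((∑ j, a k j:ℕ):ℝ) = ∑ i : Fin n, (a k i:ℝ) by push_cast; rfl]
      have hpos : (0:ℝ) < ∑ i : Fin n, (a k i:ℝ) := by
        have h2 : ((∑ j, a k j : ℕ):ℝ) = ∑ i : Fin n, (a k i:ℝ) := by push_cast; rfl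
        linarith [hNR, h2]
      exact div_self hpos.ne'
  have hA : ∀ i, Tendsto (fun k : ℕ => (a k i : ℝ)/(k:ℝ)) atTop (𝓝 (p i)) := by
    intro i
    rw [← tendsto_sub_nhds_zero_iff]
    refine squeeze_zero_norm' (a := fun k : ℕ => 1/(k:ℝ)) ?_ tendsto_one_div_atTop_nhds_zero_nat
    · filter_upwards [Filter.eventually_ge_atTop 1] with k hk
      have hkR : (0:ℝ) < k := by exact_mod_cast hk
      have h1 : (k:ℝ) * p i < (a k i : ℝ) := by
        have := Nat.lt_floor_add_one ((k:ℝ) * p i)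
        simp only [haDef]
        push_cast
        linarith
      have h2 : (a k i : ℝ) ≤ (k:ℝ) * p i + 1 := by
        have := Nat.floor_le (mul_nonneg (by positivity) (hp.1 i) : (0:ℝ) ≤ (k:ℝ) * p i)
        simp only [haDef]
        push_cast
        linarith
      rw [Real.norm_eq_abs, abs_le]
      constructor
      · have hle : p i ≤ (a k i:ℝ)/(k:ℝ) := by rw [le_div_iff₀ hkR]; linarith
        have h1k : (0:ℝ) ≤ 1/(k:ℝ) := by positivity
        linarith
      · have hle : (a k i:ℝ)/(k:ℝ) ≤ p i + 1/(k:ℝ) := by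
          rw [div_le_iff₀ hkR]
          have : (p i + 1/(k:ℝ)) * (k:ℝ) = (k:ℝ) * p i + 1 := by field_simp
          linarith
        linarith
  have hB : Tendsto (fun k : ℕ => ((∑ j, a k j : ℕ):ℝ)/(k:ℝ)) atTop (𝓝 1) := by
    have h1 : Tendsto (fun k : ℕ => ∑ i, (a k i:ℝ)/(k:ℝ)) atTop (𝓝 (∑ i, p i)) :=
      tendsto_finset_sum _ (fun i _ => hA i)
    rw [hp.2] at h1
    apply h1.congr
    intro k
    rw [← Finset.sum_div]
    congr 1
    push_cast
    rfl
  have hd : ∀ i, Tendsto (fun k : ℕ => d k i) atTop (𝓝 (p i)) := by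
    intro i
    have hdiv := (hA i).div hB one_ne_zero
    rw [div_one] at hdiv
    apply hdiv.congr'
    filter_upwards [Filter.eventually_ge_atTop 1] with k hk
    have hkR : (0:ℝ) < k := by exact_mod_cast hk
    have hNR : (0:ℝ) < ((∑ j, a k j : ℕ):ℝ) := by exact_mod_cast hNpos k
    rw [hdDef]
    simp only [Pi.div_apply]
    field_simp
  have htend : Tendsto d atTop (𝓝 p) := tendsto_pi_nhds.mpr hd
  have hcont : ContinuousOn (fun q : Fin n → ℝ => I q) {q | IsProb q} := hI.2.2.1 n
  have hcI : Tendsto (fun k => I (d k)) atTop (𝓝 (I p)) :=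
    (hcont.continuousWithinAt hp).tendsto.comp
      (tendsto_nhdsWithin_iff.mpr ⟨htend, Filter.Eventually.of_forall hprob⟩)
  have hcS : Tendsto (fun k => (fI I 2/Real.log 2) * shannon (d k)) atTop
      (𝓝 ((fI I 2/Real.log 2) * shannon p)) :=
    (((continuous_shannon n).tendsto p).comp htend).const_mul _
  exact tendsto_nhds_unique hcI (hcS.congr (fun k => (hrat k).symm))

lemma I_eq_shannon (hI : FaddeevConds I) {X : Type} [Fintype X] (p : X → ℝ) (hp : IsProb p) :
    I p = (fI I 2 / Real.log 2) * shannon p := by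
  set e := Fintype.equivFin X with he
  have hp' : IsProb (fun j => p (e.symm j)) := by
    refine ⟨fun j => hp.1 _, ?_⟩
    rw [Equiv.sum_comp e.symm p]
    exact hp.2
  have h1 : I (fun j => p (e.symm j)) = I p := hI.2.1 e p hp
  have h2 : I (fun j => p (e.symm j))
      = fI I 2 / Real.log 2 * shannon (fun j => p (e.symm j)) :=
    I_eq_shannon_fin I hI (Fintype.card X) (fun j => p (e.symm j)) hp'
  rw [h1, shannon_comp_equiv e p] at h2
  exact h2

end Forward5
/-- Reformulated Faddeev theorem: a map satisfying the conditions is a nonnegative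
multiple of Shannon entropy, and conversely. -/
theorem stmt5 :
    (∀ I : ∀ {X : Type} [Fintype X], (X → ℝ) → ℝ, FaddeevConds I →
      ∃ c : ℝ, 0 ≤ c ∧ ∀ {X : Type} [Fintype X] (p : X → ℝ), IsProb p →
        I p = c * shannon p) ∧
    (∀ c : ℝ, 0 ≤ c →
      FaddeevConds (fun {X : Type} [Fintype X] (p : X → ℝ) => c * shannon p)) := by
  constructor
  · intro I hI
    refine ⟨fI I 2 / Real.log 2, ?_, ?_⟩
    · exact div_nonneg (fI_nonneg I hI 2 (by norm_num)) (Real.log_nonneg (by norm_num))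
    · intro X _ p hp
      exact I_eq_shannon I hI p hp
  · exact faddeev_conds_shannon
end

section
/- Let α ∈ (0,∞) and c ≥ 0. The map F defined on measure-preserving functions f : (X,p) → (Y,q) between finite probability spaces by F(f) = c(H_α(p) − H_α(q)), where H_α is the Tsallis entropy of order α, takes values in [0,∞) and satisfies: (1) Functoriality: F(f ∘ g) = F(f) + F(g); (2) F(λf ⊕ (1−λ)g) = λ^α F(f) + (1−λ)^α F(g) for all λ ∈ [0,1]; (3) Continuity. -/
open scoped BigOperators Classical
open Filter Topology Real

/-! ### Auxiliary lemmas -/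

lemma aux_add_rpow_le {x y α : ℝ} (hx : 0 ≤ x) (hy : 0 ≤ y) (hα : 1 ≤ α) :
    x ^ α + y ^ α ≤ (x + y) ^ α := by
  have h := NNReal.add_rpow_le_rpow_add (⟨x, hx⟩ : NNReal) ⟨y, hy⟩ hα
  have h' := NNReal.coe_le_coe.2 h
  exact h'

lemma aux_rpow_add_le {x y α : ℝ} (hx : 0 ≤ x) (hy : 0 ≤ y) (h0 : 0 ≤ α) (h1 : α ≤ 1) :
    (x + y) ^ α ≤ x ^ α + y ^ α := by
  have h := NNReal.rpow_add_le_add_rpow (⟨x, hx⟩ : NNReal) ⟨y, hy⟩ h0 h1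
  have h' := NNReal.coe_le_coe.2 h
  exact h'

lemma aux_sum_rpow_le {ι : Type*} (s : Finset ι) (g : ι → ℝ) (hg : ∀ i ∈ s, 0 ≤ g i)
    {α : ℝ} (hα : 1 ≤ α) :
    ∑ i ∈ s, g i ^ α ≤ (∑ i ∈ s, g i) ^ α := by
  induction s using Finset.cons_induction with
  | empty => simp [Real.zero_rpow (by positivity : α ≠ 0)]
  | cons a s ha ih =>
    rw [Finset.sum_cons, Finset.sum_cons]
    have hga : 0 ≤ g a := hg a (Finset.mem_cons_self a s)
    have hs : ∀ i ∈ s, 0 ≤ g i := fun i hi => hg i (Finset.mem_cons_of_mem hi)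
    have h1 := ih hs
    have h2 := aux_add_rpow_le hga (Finset.sum_nonneg hs) hα
    linarith

lemma aux_rpow_sum_le {ι : Type*} (s : Finset ι) (g : ι → ℝ) (hg : ∀ i ∈ s, 0 ≤ g i)
    {α : ℝ} (hα0 : 0 < α) (hα1 : α ≤ 1) :
    (∑ i ∈ s, g i) ^ α ≤ ∑ i ∈ s, g i ^ α := by
  induction s using Finset.cons_induction with
  | empty => simp [Real.zero_rpow (by positivity : α ≠ 0)]
  | cons a s ha ih =>
    rw [Finset.sum_cons, Finset.sum_cons]
    have hga : 0 ≤ g a := hg a (Finset.mem_cons_self a s)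
    have hs : ∀ i ∈ s, 0 ≤ g i := fun i hi => hg i (Finset.mem_cons_of_mem hi)
    have h1 := ih hs
    have h2 := aux_rpow_add_le hga (Finset.sum_nonneg hs) hα0.le hα1
    linarith

lemma tsallis_one {X : Type} [Fintype X] (p : X → ℝ) : tsallis 1 p = shannon p :=
  if_pos rfl

/-- Tsallis entropy does not increase under pushforward. -/
lemma tsallis_anti {X Y : Type} [Fintype X] [Fintype Y] {α : ℝ} (hα : 0 < α)
    (p : X → ℝ) (q : Y → ℝ) (f : X → Y) (hp : IsProb p) (hq : IsProb q)
    (hmp : IsMP p q f) : tsallis α q ≤ tsallis α p := by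
  have hple : ∀ i, p i ≤ q (f i) := by
    intro i
    rw [hmp (f i)]
    have : (if f i = f i then p i else 0) ≤ ∑ i', if f i' = f i then p i' else 0 :=
      Finset.single_le_sum (f := fun i' => if f i' = f i then p i' else 0)
        (fun i' _ => by by_cases h : f i' = f i <;> simp [h, hp.1 i']) (Finset.mem_univ i)
    simpa using this
  by_cases h1 : α = 1
  · subst h1
    rw [tsallis_one, tsallis_one]
    simp only [shannon, neg_le_neg_iff]
    have step1 : ∑ i, p i * Real.log (p i) ≤ ∑ i, p i * Real.log (q (f i)) := by
      apply Finset.sum_le_sum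
      intro i _
      rcases eq_or_lt_of_le (hp.1 i) with h0 | h0
      · simp [← h0]
      · exact mul_le_mul_of_nonneg_left (Real.log_le_log h0 (hple i)) (hp.1 i)
    have step2 : ∑ i, p i * Real.log (q (f i)) = ∑ j, q j * Real.log (q j) := by
      have e : ∀ i : X, p i * Real.log (q (f i))
          = ∑ j, if f i = j then p i * Real.log (q j) else 0 := by
        intro i; simp
      rw [Finset.sum_congr rfl (fun i _ => e i), Finset.sum_comm]
      apply Finset.sum_congr rfl
      intro j _
      rw [hmp j, Finset.sum_mul]
      apply Finset.sum_congr rfl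
      intro i _
      split <;> simp
    linarith
  · have hfib : ∑ i, p i ^ α = ∑ j, ∑ i, if f i = j then p i ^ α else 0 := by
      rw [Finset.sum_comm]
      apply Finset.sum_congr rfl
      intro i _
      simp
    have hinner : ∀ j : Y, ∑ i, (if f i = j then p i else 0) ^ α
        = ∑ i, if f i = j then p i ^ α else 0 := by
      intro j
      apply Finset.sum_congr rfl
      intro i _
      split
      · rfl
      · exact Real.zero_rpow hα.ne'
    simp only [tsallis, if_neg h1]
    rcases lt_or_gt_of_ne h1 with hlt | hgt
    · -- α < 1 : ∑ q^α ≤ ∑ p^α, and 1/(α-1) < 0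
      have hkey : ∑ j, q j ^ α ≤ ∑ i, p i ^ α := by
        rw [hfib]
        apply Finset.sum_le_sum
        intro j _
        rw [← hinner j, hmp j]
        exact aux_rpow_sum_le _ _ (fun i _ => by by_cases h : f i = j <;> simp [h, hp.1 i]) hα hlt.le
      have hneg : (1 : ℝ) / (α - 1) ≤ 0 := by
        apply div_nonpos_of_nonneg_of_nonpos <;> linarith
      exact mul_le_mul_of_nonpos_left (b := 1 - ∑ i, p i ^ α) (a := 1 - ∑ j, q j ^ α)
        (by linarith) hneg
    · -- 1 < α : ∑ p^α ≤ ∑ q^α, and 0 < 1/(α-1)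
      have hkey : ∑ i, p i ^ α ≤ ∑ j, q j ^ α := by
        rw [hfib]
        apply Finset.sum_le_sum
        intro j _
        rw [← hinner j, hmp j]
        exact aux_sum_rpow_le _ _ (fun i _ => by by_cases h : f i = j <;> simp [h, hp.1 i]) hgt.le
      have hd : (0:ℝ) < α - 1 := by linarith
      have hpos : (0 : ℝ) ≤ 1 / (α - 1) := by positivity
      exact mul_le_mul_of_nonneg_left (by linarith) hpos

lemma aux_sum_cvx_rpow {X Y : Type} [Fintype X] [Fintype Y] {α lam : ℝ}
    (hl0 : 0 ≤ lam) (hl1 : lam ≤ 1) (p : X → ℝ) (q : Y → ℝ)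
    (hp : ∀ i, 0 ≤ p i) (hq : ∀ j, 0 ≤ q j) :
    ∑ z, cvx lam p q z ^ α = lam ^ α * ∑ i, p i ^ α + (1 - lam) ^ α * ∑ j, q j ^ α := by
  rw [Fintype.sum_sum_type]
  simp only [cvx, Sum.elim_inl, Sum.elim_inr]
  rw [Finset.mul_sum, Finset.mul_sum]
  congr 1
  · exact Finset.sum_congr rfl fun i _ => Real.mul_rpow hl0 (hp i)
  · exact Finset.sum_congr rfl fun j _ => Real.mul_rpow (by linarith) (hq j)

lemma aux_sum_scaled_mul_log {X : Type} [Fintype X] (t : ℝ) (p : X → ℝ)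
    (hp2 : ∑ i, p i = 1) :
    ∑ i, t * p i * Real.log (t * p i)
      = t * Real.log t + t * ∑ i, p i * Real.log (p i) := by
  have e : ∀ i : X, t * p i * Real.log (t * p i)
      = t * Real.log t * p i + t * (p i * Real.log (p i)) := by
    intro i
    by_cases ht : t = 0
    · simp [ht]
    by_cases hpi : p i = 0
    · simp [hpi]
    rw [Real.log_mul ht hpi]; ring
  rw [Finset.sum_congr rfl fun i _ => e i, Finset.sum_add_distrib, ← Finset.mul_sum,
    ← Finset.mul_sum, hp2, mul_one]

lemma shannon_cvx {X Y : Type} [Fintype X] [Fintype Y] (lam : ℝ) (p : X → ℝ) (q : Y → ℝ)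
    (hp : IsProb p) (hq : IsProb q) :
    shannon (cvx lam p q) = lam * shannon p + (1 - lam) * shannon q
      - lam * Real.log lam - (1 - lam) * Real.log (1 - lam) := by
  simp only [shannon, cvx]
  rw [Fintype.sum_sum_type]
  simp only [Sum.elim_inl, Sum.elim_inr]
  rw [aux_sum_scaled_mul_log lam p hp.2, aux_sum_scaled_mul_log (1 - lam) q hq.2]
  ring

lemma tsallis_tendsto {X : Type} [Fintype X] {α : ℝ} (hα : 0 < α)
    (pn : ℕ → X → ℝ) (p : X → ℝ)
    (h : ∀ i, Tendsto (fun n => pn n i) atTop (𝓝 (p i))) :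
    Tendsto (fun n => tsallis α (pn n)) atTop (𝓝 (tsallis α p)) := by
  by_cases h1 : α = 1
  · subst h1
    simp only [tsallis, if_pos rfl, shannon]
    exact (tendsto_finset_sum _ fun i _ =>
      (Real.continuous_mul_log.tendsto (p i)).comp (h i)).neg
  · simp only [tsallis, if_neg h1]
    exact ((tendsto_finset_sum _ fun i _ =>
      ((Real.continuousAt_rpow_const (p i) α (Or.inr hα.le)).tendsto).comp
        (h i)).const_sub 1).const_mul _

/-- The map `f ↦ c (H_α(p) - H_α(q))` is nonnegative, functorial, compatible with
convex combinations with exponent `α`, and continuous. -/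
theorem stmt15 (α : ℝ) (hα : 0 < α) (c : ℝ) (hc : 0 ≤ c) :
    -- takes values in [0, ∞)
    (∀ {X Y : Type} [Fintype X] [Fintype Y] (p : X → ℝ) (q : Y → ℝ) (f : X → Y),
      IsProb p → IsProb q → IsMP p q f → 0 ≤ c * (tsallis α p - tsallis α q)) ∧
    -- functoriality
    (∀ {X Y Z : Type} [Fintype X] [Fintype Y] [Fintype Z]
      (p : X → ℝ) (q : Y → ℝ) (r : Z → ℝ) (g : X → Y) (f : Y → Z),
      IsProb p → IsProb q → IsProb r → IsMP p q g → IsMP q r f →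
      c * (tsallis α p - tsallis α r)
        = c * (tsallis α q - tsallis α r) + c * (tsallis α p - tsallis α q)) ∧
    -- compatibility with convex combinations
    (∀ {X X' Y Y' : Type} [Fintype X] [Fintype X'] [Fintype Y] [Fintype Y']
      (p : X → ℝ) (p' : X' → ℝ) (q : Y → ℝ) (q' : Y' → ℝ) (f : X → X') (g : Y → Y')
      (lam : ℝ), 0 ≤ lam → lam ≤ 1 →
      IsProb p → IsProb p' → IsProb q → IsProb q' → IsMP p p' f → IsMP q q' g →
      c * (tsallis α (cvx lam p q) - tsallis α (cvx lam p' q'))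
        = lam ^ α * (c * (tsallis α p - tsallis α p'))
          + (1 - lam) ^ α * (c * (tsallis α q - tsallis α q'))) ∧
    -- continuity
    (∀ {X Y : Type} [Fintype X] [Fintype Y]
      (pn : ℕ → X → ℝ) (qn : ℕ → Y → ℝ) (fn : ℕ → X → Y)
      (p : X → ℝ) (q : Y → ℝ) (f : X → Y),
      (∀ n, IsProb (pn n)) → (∀ n, IsProb (qn n)) → (∀ n, IsMP (pn n) (qn n) (fn n)) →
      IsProb p → IsProb q → IsMP p q f →
      (∀ᶠ n in atTop, fn n = f) →
      (∀ i, Tendsto (fun n => pn n i) atTop (𝓝 (p i))) →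
      (∀ j, Tendsto (fun n => qn n j) atTop (𝓝 (q j))) →
      Tendsto (fun n => c * (tsallis α (pn n) - tsallis α (qn n))) atTop
        (𝓝 (c * (tsallis α p - tsallis α q)))) := by
  refine ⟨?_, ?_, ?_, ?_⟩
  · intro X Y _ _ p q f hp hq hmp
    exact mul_nonneg hc (sub_nonneg.2 (tsallis_anti hα p q f hp hq hmp))
  · intro X Y Z _ _ _ p q r g f _ _ _ _ _
    ring
  · intro X X' Y Y' _ _ _ _ p p' q q' f g lam hl0 hl1 hp hp' hq hq' hf hg
    by_cases h1 : α = 1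
    · subst h1
      simp only [tsallis_one, Real.rpow_one]
      rw [shannon_cvx lam p q hp hq, shannon_cvx lam p' q' hp' hq']
      ring
    · simp only [tsallis, if_neg h1]
      rw [aux_sum_cvx_rpow hl0 hl1 p q hp.1 hq.1, aux_sum_cvx_rpow hl0 hl1 p' q' hp'.1 hq'.1]
      ring
  · intro X Y _ _ pn qn fn p q f _ _ _ _ _ _ _ hpt hqt
    exact ((tsallis_tendsto hα pn p hpt).sub (tsallis_tendsto hα qn q hqt)).const_mul c
end
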